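/- Let L be an n×n Laplacian matrix with eigenprojection J̄ = L^⊢, let v ∈ ℝⁿ be a distribution vector, let V = 1vᵀ and D = I − V, and let δ > 0. Then: (1) the eigenprojection of L + δD equals 1·vᵀ(I + δ⁻¹L)⁻¹; and (2) as δ → 0⁺, the eigenprojection of L + δD converges to 1·vᵀJ̄. -/

import Mathlib

open Matrix Filter Topology

/-- The index of a square real matrix: the smallest `k` with
`rank (A^(k+1)) = rank (A^k)`. -/
noncomputable def matIndex {m : Type*} [Fintype m] [DecidableEq m]
    (A : Matrix m m ℝ) : ℕ :=
  sInf {k : ℕ | (A ^ (k + 1)).rank = (A ^ k).rank}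

/-- `Q` is the eigenprojection of `A` corresponding to the eigenvalue `0`:
an idempotent matrix whose range is the null space of `A ^ ind A` and whose
null space is the range of `A ^ ind A`. -/
def IsEigenprojection {m : Type*} [Fintype m] [DecidableEq m]
    (A Q : Matrix m m ℝ) : Prop :=
  Q * Q = Q ∧
  LinearMap.range Q.mulVecLin = LinearMap.ker (A ^ matIndex A).mulVecLin ∧
  LinearMap.ker Q.mulVecLin = LinearMap.range (A ^ matIndex A).mulVecLin

/-- A Laplacian matrix: nonpositive off-diagonal entries and zero row sums. -/
def IsLaplacian {m : Type*} [Fintype m] (L : Matrix m m ℝ) : Prop :=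
  (∀ i j, i ≠ j → L i j ≤ 0) ∧ ∀ i, ∑ j, L i j = 0

section Aux

variable {n : ℕ}

lemma lap_mulVec_one (L : Matrix (Fin n) (Fin n) ℝ) (hL : IsLaplacian L) :
    L *ᵥ (fun _ => (1:ℝ)) = 0 := by
  funext i
  simpa [Matrix.mulVec, dotProduct] using hL.2 i

lemma lap_diag_eq (L : Matrix (Fin n) (Fin n) ℝ) (hL : IsLaplacian L) (i : Fin n) :
    L i i = ∑ j ∈ Finset.univ.erase i, (- L i j) := by
  have h := hL.2 i
  rw [← Finset.add_sum_erase _ _ (Finset.mem_univ i)] at h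
  rw [Finset.sum_neg_distrib]
  linarith

lemma lap_diag_nonneg (L : Matrix (Fin n) (Fin n) ℝ) (hL : IsLaplacian L) (i : Fin n) :
    0 ≤ L i i := by
  rw [lap_diag_eq L hL i]
  exact Finset.sum_nonneg fun j hj => by
    have := hL.1 i j (Ne.symm (Finset.ne_of_mem_erase hj)); linarith

lemma lap_isUnit (L : Matrix (Fin n) (Fin n) ℝ) (hL : IsLaplacian L)
    {ε : ℝ} (hε : 0 < ε) : IsUnit (1 + ε • L) := by
  rw [Matrix.isUnit_iff_isUnit_det, isUnit_iff_ne_zero]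
  intro hdet
  obtain ⟨x, hx0, hx⟩ := (Matrix.exists_mulVec_eq_zero_iff).2 hdet
  -- pick i maximizing |x i|
  have hne : (Finset.univ : Finset (Fin n)).Nonempty := by
    rcases Function.ne_iff.1 hx0 with ⟨i, -⟩
    exact ⟨i, Finset.mem_univ i⟩
  obtain ⟨i, -, hi⟩ := Finset.exists_max_image Finset.univ (fun j => |x j|) hne
  have hxi : x i + ε * ∑ j, L i j * x j = 0 := by
    rw [Matrix.add_mulVec, Matrix.smul_mulVec, Matrix.one_mulVec] at hx
    have := congrFun hx i
    simpa [Matrix.mulVec, dotProduct] using this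
  have hsplit : ∑ j, L i j * x j
      = L i i * x i + ∑ j ∈ Finset.univ.erase i, L i j * x j := by
    rw [← Finset.add_sum_erase _ _ (Finset.mem_univ i)]
  have key : (1 + ε * L i i) * x i = ∑ j ∈ Finset.univ.erase i, (ε * (- L i j)) * x j := by
    rw [hsplit] at hxi
    rw [Finset.sum_congr rfl (fun j _ => by ring : ∀ j ∈ Finset.univ.erase i,
      (ε * (- L i j)) * x j = -(ε * (L i j * x j)))]
    rw [Finset.sum_neg_distrib, ← Finset.mul_sum]
    ring_nf
    ring_nf at hxi
    linarith
  have hdiag : 0 ≤ L i i := by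
    have h := lap_diag_eq L hL i
    have : ∀ j ∈ Finset.univ.erase i, (0:ℝ) ≤ - L i j := fun j hj => by
      have := hL.1 i j (Ne.symm (Finset.ne_of_mem_erase hj)); linarith
    rw [h]; exact Finset.sum_nonneg this
  have hbound : (1 + ε * L i i) * |x i| ≤ (ε * L i i) * |x i| := by
    have h1 : |(1 + ε * L i i) * x i| ≤ ∑ j ∈ Finset.univ.erase i, (ε * (- L i j)) * |x j| := by
      rw [key]
      refine (Finset.abs_sum_le_sum_abs _ _).trans ?_
      refine Finset.sum_le_sum fun j hj => ?_
      have hLij : (0:ℝ) ≤ - L i j := by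
        have := hL.1 i j (Ne.symm (Finset.ne_of_mem_erase hj)); linarith
      rw [abs_mul, abs_of_nonneg (by positivity : (0:ℝ) ≤ ε * (- L i j))]
    have h2 : ∑ j ∈ Finset.univ.erase i, (ε * (- L i j)) * |x j|
        ≤ ∑ j ∈ Finset.univ.erase i, (ε * (- L i j)) * |x i| := by
      refine Finset.sum_le_sum fun j hj => ?_
      have hLij : (0:ℝ) ≤ - L i j := by
        have := hL.1 i j (Ne.symm (Finset.ne_of_mem_erase hj)); linarith
      exact mul_le_mul_of_nonneg_left (hi j (Finset.mem_univ j)) (by positivity)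
    have h3 : ∑ j ∈ Finset.univ.erase i, (ε * (- L i j)) * |x i| = (ε * L i i) * |x i| := by
      rw [← Finset.sum_mul, ← Finset.mul_sum, ← lap_diag_eq L hL i]
    have h4 : |(1 + ε * L i i) * x i| = (1 + ε * L i i) * |x i| := by
      rw [abs_mul, abs_of_nonneg (by positivity : (0:ℝ) ≤ 1 + ε * L i i)]
    linarith
  have hxi0 : x i = 0 := by
    have : |x i| ≤ 0 := by nlinarith [abs_nonneg (x i)]
    simpa using le_antisymm this (abs_nonneg _) |>.symm ▸ (abs_eq_zero.1 (le_antisymm this (abs_nonneg _)))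
  apply hx0
  funext j
  have := hi j (Finset.mem_univ j)
  rw [hxi0] at this
  simpa using abs_eq_zero.1 (le_antisymm (by simpa using this) (abs_nonneg _))

lemma lap_ker_sq (L : Matrix (Fin n) (Fin n) ℝ) (hL : IsLaplacian L)
    (x : Fin n → ℝ) (hx : L *ᵥ (L *ᵥ x) = 0) : L *ᵥ x = 0 := by
  set T : ℝ := 1 + ∑ i, L i i with hT
  have hT1 : (1:ℝ) ≤ T := by
    have : (0:ℝ) ≤ ∑ i, L i i := Finset.sum_nonneg fun i _ => lap_diag_nonneg L hL i
    simp [hT]; linarith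
  have hTpos : (0:ℝ) < T := by linarith
  set s : ℝ := T⁻¹ with hs
  have hspos : 0 < s := by positivity
  set P : Matrix (Fin n) (Fin n) ℝ := 1 - s • L with hP
  have hPapp : ∀ i j, P i j = (if i = j then (1:ℝ) else 0) - s * L i j := by
    intro i j
    simp [hP, Matrix.sub_apply, Matrix.one_apply, Matrix.smul_apply, smul_eq_mul]
  have hP0 : ∀ i j, 0 ≤ P i j := by
    intro i j
    rw [hPapp]
    by_cases h : i = j
    · subst h
      rw [if_pos rfl]
      have hLii : L i i ≤ T := by
        have : L i i ≤ ∑ k, L k k :=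
          Finset.single_le_sum (fun k _ => lap_diag_nonneg L hL k) (Finset.mem_univ i)
        simp [hT]; linarith
      have h2 : s * L i i ≤ s * T := mul_le_mul_of_nonneg_left hLii (le_of_lt hspos)
      have h3 : s * T = 1 := by rw [hs]; exact inv_mul_cancel₀ (ne_of_gt hTpos)
      rw [h3] at h2
      linarith
    · simp only [if_neg h]
      have := hL.1 i j h
      nlinarith
  have hProw : ∀ i, ∑ j, P i j = 1 := by
    intro i
    simp only [hPapp]
    rw [Finset.sum_sub_distrib, ← Finset.mul_sum, hL.2 i]
    simp
  have hbound : ∀ (z : Fin n → ℝ) (C : ℝ), (∀ j, |z j| ≤ C) → ∀ i, |(P *ᵥ z) i| ≤ C := by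
    intro z C hC i
    have h1 : |(P *ᵥ z) i| ≤ ∑ j, P i j * |z j| := by
      have e1 : (P *ᵥ z) i = ∑ j, P i j * z j := by
        simp [Matrix.mulVec, dotProduct]
      rw [e1]
      refine (Finset.abs_sum_le_sum_abs _ _).trans ?_
      refine Finset.sum_le_sum fun j _ => ?_
      rw [abs_mul, abs_of_nonneg (hP0 i j)]
    have h2 : ∑ j, P i j * |z j| ≤ ∑ j, P i j * C :=
      Finset.sum_le_sum fun j _ => mul_le_mul_of_nonneg_left (hC j) (hP0 i j)
    rw [← Finset.sum_mul, hProw i, one_mul] at h2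
    exact le_trans h1 h2
  set y : Fin n → ℝ := (-s) • (L *ᵥ x) with hy
  have hPx : P *ᵥ x = x + y := by
    simp [hP, hy, Matrix.sub_mulVec, Matrix.one_mulVec, Matrix.smul_mulVec]
    funext i; simp [neg_smul]; ring
  have hPy : P *ᵥ y = y := by
    have hLy : L *ᵥ y = 0 := by
      rw [hy, Matrix.mulVec_smul, hx]; simp
    simp [hP, Matrix.sub_mulVec, Matrix.one_mulVec, Matrix.smul_mulVec, hLy]
  set C : ℝ := ∑ j, |x j| with hC
  have hxC : ∀ j, |x j| ≤ C :=
    fun j => Finset.single_le_sum (fun k _ => abs_nonneg (x k)) (Finset.mem_univ j)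
  have claim : ∀ k : ℕ, ∀ i, |x i + (k:ℝ) * y i| ≤ C := by
    intro k
    induction k with
    | zero => simpa using hxC
    | succ k ih =>
      have hz : ∀ i, x i + ((k:ℝ)+1) * y i = (P *ᵥ (fun j => x j + (k:ℝ) * y j)) i := by
        intro i
        have : P *ᵥ (fun j => x j + (k:ℝ) * y j) = (P *ᵥ x) + (k:ℝ) • (P *ᵥ y) := by
          rw [← Matrix.mulVec_smul, ← Matrix.mulVec_add]
          congr 1
        rw [this, hPx, hPy]
        simp [Pi.add_apply]; ring
      intro i
      rw [Nat.cast_succ, hz i]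
      exact hbound _ C ih i
  have hy0 : y = 0 := by
    funext i
    by_contra hyi
    obtain ⟨k, hk⟩ := exists_nat_gt ((C + |x i|) / |y i|)
    have hyabs : 0 < |y i| := abs_pos.2 hyi
    have hk' : C + |x i| < (k:ℝ) * |y i| := by
      rw [div_lt_iff₀ hyabs] at hk; linarith
    have h1 := claim k i
    have h2 : (k:ℝ) * |y i| - |x i| ≤ |x i + (k:ℝ) * y i| := by
      have := abs_sub_abs_le_abs_sub ((k:ℝ) * y i) (-(x i))
      simp only [abs_mul, Nat.abs_cast, abs_neg, sub_neg_eq_add] at this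
      calc (k:ℝ) * |y i| - |x i| ≤ |(k:ℝ) * y i + x i| := by
            have h3 : |(k:ℝ)| = (k:ℝ) := Nat.abs_cast k
            nlinarith [abs_sub_abs_le_abs_sub ((k:ℝ) * y i) (-(x i)),
              abs_mul ((k:ℝ)) (y i)]
        _ = |x i + (k:ℝ) * y i| := by rw [add_comm]
    linarith
  have : (-s) • (L *ᵥ x) = 0 := by rw [← hy, hy0]
  have hns : (-s) ≠ 0 := by
    simp only [neg_ne_zero]
    exact ne_of_gt hspos
  exact (smul_eq_zero.1 this).resolve_left hns

lemma rank_add_ker (A : Matrix (Fin n) (Fin n) ℝ) :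
    A.rank + Module.finrank ℝ (LinearMap.ker A.mulVecLin) = n := by
  have := LinearMap.finrank_range_add_finrank_ker A.mulVecLin
  simpa [Matrix.rank] using this

lemma rank_eq_of_ker_eq (A B : Matrix (Fin n) (Fin n) ℝ)
    (h : LinearMap.ker A.mulVecLin = LinearMap.ker B.mulVecLin) : A.rank = B.rank := by
  have hA := rank_add_ker A
  have hB := rank_add_ker B
  rw [h] at hA
  omega

lemma matIndex_eq_one (A : Matrix (Fin n) (Fin n) ℝ)
    (h1 : (A ^ 2).rank = (A ^ 1).rank) (h0 : (A ^ 1).rank ≠ (A ^ 0).rank) :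
    matIndex A = 1 := by
  have h1' : 1 ∈ {k : ℕ | (A ^ (k + 1)).rank = (A ^ k).rank} := h1
  refine le_antisymm (Nat.sInf_le h1') ?_
  by_contra h
  push_neg at h
  have hmem := Nat.sInf_mem (⟨1, h1'⟩ : {k : ℕ | (A ^ (k + 1)).rank = (A ^ k).rank}.Nonempty)
  have h0' : matIndex A = 0 := by omega
  rw [show matIndex A = sInf {k : ℕ | (A ^ (k + 1)).rank = (A ^ k).rank} from rfl] at h0'
  rw [h0'] at hmem
  exact h0 hmem

lemma mulVec_eq_zero_of_forall (A : Matrix (Fin n) (Fin n) ℝ)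
    (h : ∀ x, A *ᵥ x = 0) : A = 0 := by
  ext i j
  have := congrFun (h (Pi.single j 1)) i
  simpa using this

lemma vecMulVec_mulVec (a b x : Fin n → ℝ) :
    Matrix.vecMulVec a b *ᵥ x = (b ⬝ᵥ x) • a := by
  funext i
  simp [Matrix.mulVec, dotProduct, Matrix.vecMulVec_apply, Finset.sum_mul,
    Finset.mul_sum, mul_comm, mul_assoc, mul_left_comm]

lemma vecMul_vecMulVec (y a b : Fin n → ℝ) :
    y ᵥ* Matrix.vecMulVec a b = (y ⬝ᵥ a) • b := by
  funext j
  simp only [Matrix.vecMul, dotProduct, Matrix.vecMulVec_apply, Pi.smul_apply,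
    smul_eq_mul, Finset.sum_mul]
  exact Finset.sum_congr rfl fun k _ => by ring

lemma mul_vecMulVec (M : Matrix (Fin n) (Fin n) ℝ) (a b : Fin n → ℝ) :
    M * Matrix.vecMulVec a b = Matrix.vecMulVec (M *ᵥ a) b := by
  ext i j
  simp [Matrix.mul_apply, Matrix.vecMulVec_apply, Matrix.mulVec, dotProduct,
    Finset.sum_mul, mul_assoc]

lemma vecMulVec_mul (M : Matrix (Fin n) (Fin n) ℝ) (a b : Fin n → ℝ) :
    Matrix.vecMulVec a b * M = Matrix.vecMulVec a (b ᵥ* M) := by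
  ext i j
  simp [Matrix.mul_apply, Matrix.vecMulVec_apply, Matrix.vecMul, dotProduct,
    Finset.mul_sum, mul_assoc]

lemma vecMul_smul_mat (y : Fin n → ℝ) (c : ℝ) (M : Matrix (Fin n) (Fin n) ℝ) :
    y ᵥ* (c • M) = c • (y ᵥ* M) := by
  funext j
  simp [Matrix.vecMul, dotProduct, Finset.mul_sum]
  exact Finset.sum_congr rfl fun k _ => by ring

lemma part1 (L : Matrix (Fin n) (Fin n) ℝ) (hL : IsLaplacian L)
    (v : Fin n → ℝ) (hvsum : ∑ i, v i = 1) (hn : 0 < n)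
    (δ : ℝ) (hδ : 0 < δ) :
    IsEigenprojection (L + δ • (1 - Matrix.vecMulVec (fun _ : Fin n => (1:ℝ)) v))
      (Matrix.vecMulVec (fun _ : Fin n => (1:ℝ)) (v ᵥ* (1 + δ⁻¹ • L)⁻¹)) := by
  set ones : Fin n → ℝ := fun _ => 1 with hones
  have honen : ones ≠ 0 := by
    intro h
    have := congrFun h ⟨0, hn⟩
    simp [hones] at this
  set A : Matrix (Fin n) (Fin n) ℝ := 1 + δ⁻¹ • L with hA
  have hAu : IsUnit A := lap_isUnit L hL (inv_pos.2 hδ)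
  have hAd : IsUnit A.det := (Matrix.isUnit_iff_isUnit_det A).1 hAu
  have hL1 : L *ᵥ ones = 0 := lap_mulVec_one L hL
  have hA1 : A *ᵥ ones = ones := by
    rw [hA, Matrix.add_mulVec, Matrix.one_mulVec, Matrix.smul_mulVec, hL1]
    simp
  have hAinv1 : A⁻¹ *ᵥ ones = ones := by
    conv_lhs => rw [← hA1]
    rw [Matrix.mulVec_mulVec, Matrix.nonsing_inv_mul A hAd, Matrix.one_mulVec]
  have hvones : v ⬝ᵥ ones = 1 := by
    simp [dotProduct, hones, hvsum]
  set w : Fin n → ℝ := v ᵥ* A⁻¹ with hw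
  have hwones : w ⬝ᵥ ones = 1 := by
    rw [hw, ← dotProduct_mulVec, hAinv1, hvones]
  set D : Matrix (Fin n) (Fin n) ℝ := 1 - Matrix.vecMulVec ones v with hD
  set M : Matrix (Fin n) (Fin n) ℝ := L + δ • D with hM
  have hDx : ∀ x, D *ᵥ x = x - (v ⬝ᵥ x) • ones := by
    intro x
    rw [hD, Matrix.sub_mulVec, Matrix.one_mulVec, _root_.vecMulVec_mulVec]
  have hDones : D *ᵥ ones = 0 := by
    rw [hDx, hvones, one_smul, sub_self]
  have hMD : M = (δ • A) * D := by
    have h1 : δ • A = δ • (1 : Matrix (Fin n) (Fin n) ℝ) + L := by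
      rw [hA, smul_add, smul_smul, mul_inv_cancel₀ (ne_of_gt hδ), one_smul]
    rw [h1, hD, mul_sub, mul_one, add_mul, Matrix.smul_mul, one_mul, _root_.mul_vecMulVec, hL1]
    have : Matrix.vecMulVec (0 : Fin n → ℝ) v = 0 := by
      ext i j; simp [Matrix.vecMulVec_apply]
    rw [this, hM, hD, smul_sub]
    abel
  have hδAd : IsUnit (δ • A).det := by
    rw [Matrix.det_smul, isUnit_iff_ne_zero]
    exact mul_ne_zero (pow_ne_zero _ (ne_of_gt hδ)) (isUnit_iff_ne_zero.1 hAd)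
  have hδAu : IsUnit (δ • A) := (Matrix.isUnit_iff_isUnit_det _).2 hδAd
  have hδAinj : Function.Injective ((δ • A).mulVec) :=
    Matrix.mulVec_injective_iff_isUnit.2 hδAu
  have hMx : ∀ x, M *ᵥ x = (δ • A) *ᵥ (D *ᵥ x) := by
    intro x
    rw [hMD, ← Matrix.mulVec_mulVec]
  have hMker : ∀ x, M *ᵥ x = 0 ↔ D *ᵥ x = 0 := by
    intro x
    rw [hMx]
    constructor
    · intro h
      apply hδAinj
      rw [h, Matrix.mulVec_zero]
    · intro h
      rw [h, Matrix.mulVec_zero]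
  have hMones : M *ᵥ ones = 0 := by rw [hMker]; exact hDones
  have hkerM : LinearMap.ker M.mulVecLin = Submodule.span ℝ {ones} := by
    ext x
    rw [LinearMap.mem_ker, Matrix.mulVecLin_apply, Submodule.mem_span_singleton]
    constructor
    · intro h
      refine ⟨v ⬝ᵥ x, ?_⟩
      have := (hMker x).1 h
      rw [hDx] at this
      exact (sub_eq_zero.1 this).symm
    · rintro ⟨c, rfl⟩
      rw [Matrix.mulVec_smul, hMones, smul_zero]
  have hwM : w ᵥ* M = 0 := by
    rw [hMD, ← Matrix.vecMul_vecMul, vecMul_smul_mat]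
    have h1 : w ᵥ* A = v := by
      rw [hw, Matrix.vecMul_vecMul, Matrix.nonsing_inv_mul A hAd, Matrix.vecMul_one]
    rw [h1]
    have h2 : v ᵥ* D = 0 := by
      rw [hD, Matrix.vecMul_sub, Matrix.vecMul_one, _root_.vecMul_vecMulVec, hvones, one_smul,
        sub_self]
    rw [Matrix.smul_vecMul, h2, smul_zero]
  have hwMx : ∀ x, w ⬝ᵥ (M *ᵥ x) = 0 := by
    intro x
    rw [dotProduct_mulVec, hwM, zero_dotProduct]
  have hkerM2 : LinearMap.ker (M * M).mulVecLin = LinearMap.ker M.mulVecLin := by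
    ext x
    rw [LinearMap.mem_ker, LinearMap.mem_ker, Matrix.mulVecLin_apply, Matrix.mulVecLin_apply,
      ← Matrix.mulVec_mulVec]
    constructor
    · intro h
      have hmem : M *ᵥ x ∈ LinearMap.ker M.mulVecLin := by
        rw [LinearMap.mem_ker, Matrix.mulVecLin_apply]; exact h
      rw [hkerM, Submodule.mem_span_singleton] at hmem
      obtain ⟨c, hc⟩ := hmem
      have hc0 : w ⬝ᵥ (M *ᵥ x) = c := by
        rw [← hc, dotProduct_smul, hwones, smul_eq_mul, mul_one]
      rw [hwMx x] at hc0
      rw [← hc, ← hc0, zero_smul]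
    · intro h
      rw [h, Matrix.mulVec_zero]
  have hrank2 : (M ^ 2).rank = (M ^ 1).rank := by
    rw [pow_two, pow_one]
    exact rank_eq_of_ker_eq _ _ hkerM2
  have hrank0 : (M ^ 1).rank ≠ (M ^ 0).rank := by
    rw [pow_one, pow_zero, Matrix.rank_one]
    intro h
    rw [Fintype.card_fin] at h
    have h1 := rank_add_ker M
    have hker0 : Module.finrank ℝ (LinearMap.ker M.mulVecLin) = 0 := by omega
    rw [Submodule.finrank_eq_zero] at hker0
    have hmem : ones ∈ LinearMap.ker M.mulVecLin := by
      rw [LinearMap.mem_ker, Matrix.mulVecLin_apply]; exact hMones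
    rw [hker0, Submodule.mem_bot] at hmem
    exact honen hmem
  have hidx : matIndex M = 1 := matIndex_eq_one M hrank2 hrank0
  set Q := Matrix.vecMulVec ones w with hQ
  have hQQ : Q * Q = Q := by
    rw [hQ, _root_.vecMulVec_mul, _root_.vecMul_vecMulVec, hwones, one_smul]
  have hrangeQ : LinearMap.range Q.mulVecLin = Submodule.span ℝ {ones} := by
    apply le_antisymm
    · rintro y ⟨x, rfl⟩
      rw [Matrix.mulVecLin_apply, hQ, _root_.vecMulVec_mulVec]
      exact Submodule.smul_mem _ _ (Submodule.mem_span_singleton_self ones)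
    · rw [Submodule.span_singleton_le_iff_mem]
      exact ⟨ones, by rw [Matrix.mulVecLin_apply, hQ, _root_.vecMulVec_mulVec, hwones, one_smul]⟩
  have hkerQle : LinearMap.range M.mulVecLin ≤ LinearMap.ker Q.mulVecLin := by
    rintro y ⟨x, rfl⟩
    rw [LinearMap.mem_ker, Matrix.mulVecLin_apply, Matrix.mulVecLin_apply, hQ,
      _root_.vecMulVec_mulVec, hwMx, zero_smul]
  have hfr1 : Module.finrank ℝ (Submodule.span ℝ ({ones} : Set (Fin n → ℝ))) = 1 :=
    finrank_span_singleton honen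
  have hrM := rank_add_ker M
  rw [hkerM, hfr1] at hrM
  have hrQ := rank_add_ker Q
  have hrQ1 : Q.rank = 1 := by
    have hdef : Q.rank = Module.finrank ℝ (LinearMap.range Q.mulVecLin) := rfl
    rw [hdef, hrangeQ, hfr1]
  have hfrkerQ : Module.finrank ℝ (LinearMap.ker Q.mulVecLin) = n - 1 := by omega
  have hfrrangeM : Module.finrank ℝ (LinearMap.range M.mulVecLin) = n - 1 := by
    have hdef : M.rank = Module.finrank ℝ (LinearMap.range M.mulVecLin) := rfl
    omega
  have hkerQ : LinearMap.ker Q.mulVecLin = LinearMap.range M.mulVecLin :=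
    (Submodule.eq_of_le_of_finrank_eq hkerQle (by rw [hfrrangeM, hfrkerQ])).symm
  refine ⟨hQQ, ?_, ?_⟩
  · rw [hidx, pow_one, hkerM]
    exact hrangeQ
  · rw [hidx, pow_one]
    exact hkerQ
lemma part2 (L J : Matrix (Fin n) (Fin n) ℝ) (hL : IsLaplacian L)
    (hJ : IsEigenprojection L J) (hn : 0 < n) (v : Fin n → ℝ) :
    Tendsto (fun ε : ℝ => Matrix.vecMulVec (fun _ : Fin n => (1:ℝ)) (v ᵥ* (1 + ε⁻¹ • L)⁻¹))
      (𝓝[>] 0) (𝓝 (Matrix.vecMulVec (fun _ : Fin n => (1:ℝ)) (v ᵥ* J))) := by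
  set ones : Fin n → ℝ := fun _ => 1 with hones
  have honen : ones ≠ 0 := by
    intro h
    have := congrFun h ⟨0, hn⟩
    simp [hones] at this
  have hL1 : L *ᵥ ones = 0 := lap_mulVec_one L hL
  -- matIndex L = 1
  have hkerL2 : LinearMap.ker (L * L).mulVecLin = LinearMap.ker L.mulVecLin := by
    ext x
    rw [LinearMap.mem_ker, LinearMap.mem_ker, Matrix.mulVecLin_apply, Matrix.mulVecLin_apply,
      ← Matrix.mulVec_mulVec]
    exact ⟨fun h => lap_ker_sq L hL x h, fun h => by rw [h, Matrix.mulVec_zero]⟩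
  have hrank2 : (L ^ 2).rank = (L ^ 1).rank := by
    rw [pow_two, pow_one]
    exact rank_eq_of_ker_eq _ _ hkerL2
  have hrank0 : (L ^ 1).rank ≠ (L ^ 0).rank := by
    rw [pow_one, pow_zero, Matrix.rank_one]
    intro h
    rw [Fintype.card_fin] at h
    have h1 := rank_add_ker L
    have hker0 : Module.finrank ℝ (LinearMap.ker L.mulVecLin) = 0 := by omega
    rw [Submodule.finrank_eq_zero] at hker0
    have hmem : ones ∈ LinearMap.ker L.mulVecLin := by
      rw [LinearMap.mem_ker, Matrix.mulVecLin_apply]; exact hL1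
    rw [hker0, Submodule.mem_bot] at hmem
    exact honen hmem
  have hidx : matIndex L = 1 := matIndex_eq_one L hrank2 hrank0
  obtain ⟨hJJ, hrangeJ, hkerJ⟩ := hJ
  rw [hidx, pow_one] at hrangeJ hkerJ
  -- L*J = 0 and J*L = 0
  have hLJ : L * J = 0 := by
    apply mulVec_eq_zero_of_forall
    intro x
    rw [← Matrix.mulVec_mulVec]
    have : J *ᵥ x ∈ LinearMap.ker L.mulVecLin := by
      rw [← hrangeJ]
      exact ⟨x, rfl⟩
    rwa [LinearMap.mem_ker, Matrix.mulVecLin_apply] at this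
  have hJL : J * L = 0 := by
    apply mulVec_eq_zero_of_forall
    intro x
    rw [← Matrix.mulVec_mulVec]
    have : L *ᵥ x ∈ LinearMap.ker J.mulVecLin := by
      rw [hkerJ]
      exact ⟨x, rfl⟩
    rwa [LinearMap.mem_ker, Matrix.mulVecLin_apply] at this
  -- B = L + J is invertible
  set B : Matrix (Fin n) (Fin n) ℝ := L + J with hB
  have hBd : B.det ≠ 0 := by
    intro h
    obtain ⟨x, hx0, hx⟩ := (Matrix.exists_mulVec_eq_zero_iff).2 h
    have hJx : J *ᵥ x = 0 := by
      have h1 : J *ᵥ (B *ᵥ x) = 0 := by rw [hx, Matrix.mulVec_zero]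
      rw [Matrix.mulVec_mulVec, hB, mul_add, hJL, hJJ, zero_add] at h1
      exact h1
    have hLx : L *ᵥ x = 0 := by
      have : B *ᵥ x = L *ᵥ x + J *ᵥ x := by rw [hB, Matrix.add_mulVec]
      rw [hx, hJx, add_zero] at this
      exact this.symm
    have hxr : x ∈ LinearMap.range J.mulVecLin := by
      rw [hrangeJ, LinearMap.mem_ker, Matrix.mulVecLin_apply]
      exact hLx
    obtain ⟨y, hy⟩ := hxr
    rw [Matrix.mulVecLin_apply] at hy
    apply hx0
    have : J *ᵥ (J *ᵥ y) = J *ᵥ y := by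
      rw [Matrix.mulVec_mulVec, hJJ]
    rw [← hy, ← this, hy, hJx]
  -- continuity setup
  set F : ℝ → Matrix (Fin n) (Fin n) ℝ := fun ε => ε • (1 : Matrix (Fin n) (Fin n) ℝ) + B
    with hF
  have hF0 : F 0 = B := by rw [hF]; simp
  have hFcont : Continuous F := by
    apply Continuous.add
    · exact continuous_id.smul continuous_const
    · exact continuous_const
  have hdet : Tendsto (fun ε => (F ε).det) (𝓝 0) (𝓝 B.det) := by
    have := (hFcont.matrix_det).tendsto 0
    rwa [hF0] at this
  have hev : ∀ᶠ ε in 𝓝[>] (0:ℝ), (F ε).det ≠ 0 ∧ 0 < ε := by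
    refine Filter.Eventually.and ?_ self_mem_nhdsWithin
    exact eventually_nhdsWithin_of_eventually_nhds (hdet.eventually_ne hBd)
  -- key identity
  have hkey : ∀ ε : ℝ, 0 < ε → (F ε).det ≠ 0 →
      (1 + ε⁻¹ • L)⁻¹ = J + ε • ((1 - J) * (F ε)⁻¹) := by
    intro ε hε hFd
    have hFdu : IsUnit (F ε).det := isUnit_iff_ne_zero.2 hFd
    set E : Matrix (Fin n) (Fin n) ℝ := ε • 1 + L with hE
    have hEu : IsUnit (1 + ε⁻¹ • L) := lap_isUnit L hL (inv_pos.2 hε)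
    have hEs : E = ε • (1 + ε⁻¹ • L) := by
      rw [hE, smul_add, smul_smul, mul_inv_cancel₀ (ne_of_gt hε), one_smul]
    have hEd : IsUnit E.det := by
      rw [hEs, Matrix.det_smul, isUnit_iff_ne_zero]
      exact mul_ne_zero (pow_ne_zero _ (ne_of_gt hε))
        (isUnit_iff_ne_zero.1 ((Matrix.isUnit_iff_isUnit_det _).1 hEu))
    have hEJ : E * J = ε • J := by
      rw [hE, add_mul, hLJ, add_zero, Matrix.smul_mul, one_mul]
    have hEinvJ : E⁻¹ * J = ε⁻¹ • J := by
      have h1 : E⁻¹ * (E * J) = J := by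
        rw [← mul_assoc, Matrix.nonsing_inv_mul E hEd, one_mul]
      rw [hEJ, Matrix.mul_smul] at h1
      have h2 : ε⁻¹ • (ε • (E⁻¹ * J)) = ε⁻¹ • J := by rw [h1]
      rwa [smul_smul, inv_mul_cancel₀ (ne_of_gt hε), one_smul] at h2
    have hcomm : E * (1 - J) = (1 - J) * F ε := by
      rw [mul_sub, mul_one, hEJ, hF, hB, sub_mul, one_mul, mul_add, mul_add,
        Matrix.mul_smul, mul_one, hJL, hJJ]
      rw [hE]
      module
    have hinvcomm : E⁻¹ * (1 - J) = (1 - J) * (F ε)⁻¹ := by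
      have h1 : E⁻¹ * ((1 - J) * F ε) * (F ε)⁻¹ = E⁻¹ * (1 - J) := by
        rw [mul_assoc (E⁻¹), mul_assoc, Matrix.mul_nonsing_inv _ hFdu]
        rw [mul_one]
      rw [← hcomm, ← mul_assoc, Matrix.nonsing_inv_mul E hEd, one_mul] at h1
      exact h1.symm
    have hinv_scaled : (1 + ε⁻¹ • L)⁻¹ = ε • E⁻¹ := by
      apply Matrix.inv_eq_right_inv
      have : (1 + ε⁻¹ • L) = ε⁻¹ • E := by
        rw [hEs, smul_smul, inv_mul_cancel₀ (ne_of_gt hε), one_smul]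
      rw [this, Matrix.smul_mul, Matrix.mul_smul, Matrix.mul_nonsing_inv E hEd,
        smul_smul, inv_mul_cancel₀ (ne_of_gt hε), one_smul]
    rw [hinv_scaled]
    have hsplit : E⁻¹ = E⁻¹ * J + E⁻¹ * (1 - J) := by
      rw [mul_sub, mul_one]
      abel
    rw [hsplit, smul_add, hEinvJ, smul_smul, mul_inv_cancel₀ (ne_of_gt hε), one_smul,
      hinvcomm]
  -- limit of G
  have hIcont : ContinuousAt (fun X : Matrix (Fin n) (Fin n) ℝ => X⁻¹) B := by
    apply continuousAt_matrix_inv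
    rw [Ring.inverse_eq_inv']
    exact continuousAt_inv₀ hBd
  have hFinv : Tendsto (fun ε => (F ε)⁻¹) (𝓝 0) (𝓝 B⁻¹) := by
    have hTF : Tendsto F (𝓝 (0:ℝ)) (𝓝 B) := by
      have := hFcont.continuousAt (x := (0:ℝ))
      rwa [ContinuousAt, hF0] at this
    exact (hIcont.tendsto).comp hTF
  have hGt : Tendsto (fun ε : ℝ => J + ε • ((1 - J) * (F ε)⁻¹)) (𝓝[>] 0) (𝓝 J) := by
    have h1 : Tendsto (fun ε : ℝ => ε • ((1 - J) * (F ε)⁻¹)) (𝓝 0)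
        (𝓝 ((0:ℝ) • ((1 - J) * B⁻¹))) :=
      tendsto_id.smul ((tendsto_const_nhds.mul hFinv))
    rw [zero_smul] at h1
    have h2 : Tendsto (fun ε : ℝ => J + ε • ((1 - J) * (F ε)⁻¹)) (𝓝 0) (𝓝 (J + 0)) :=
      tendsto_const_nhds.add h1
    rw [add_zero] at h2
    exact h2.mono_left nhdsWithin_le_nhds
  -- conclude
  have hφ : Continuous (fun X : Matrix (Fin n) (Fin n) ℝ => Matrix.vecMulVec ones v * X) :=
    continuous_const.matrix_mul continuous_id
  have hcomp : Tendsto (fun ε : ℝ => Matrix.vecMulVec ones v * (J + ε • ((1 - J) * (F ε)⁻¹)))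
      (𝓝[>] 0) (𝓝 (Matrix.vecMulVec ones v * J)) :=
    ((hφ.tendsto J).comp hGt)
  have heq : (fun ε : ℝ => Matrix.vecMulVec ones (v ᵥ* (1 + ε⁻¹ • L)⁻¹))
      =ᶠ[𝓝[>] (0:ℝ)] (fun ε : ℝ => Matrix.vecMulVec ones v * (J + ε • ((1 - J) * (F ε)⁻¹))) := by
    filter_upwards [hev] with ε hε
    rw [← _root_.vecMulVec_mul, hkey ε hε.2 hε.1]
  have hfin : Matrix.vecMulVec ones (v ᵥ* J) = Matrix.vecMulVec ones v * J :=
    (_root_.vecMulVec_mul J ones v).symm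
  rw [hfin]
  exact hcomp.congr' heq.symm

end Aux

/-- Background-links regularization: for a distribution vector `v`,
`V = 1vᵀ`, `D = I - V` and `δ > 0`, the eigenprojection of `L + δD` equals
`1·vᵀ(I + δ⁻¹L)⁻¹`, and it converges to `1·vᵀJ̄` as `δ → 0⁺`. -/
theorem eigenprojection_background_links {n : ℕ}
    (L J : Matrix (Fin n) (Fin n) ℝ)
    (hL : IsLaplacian L) (hJ : IsEigenprojection L J)
    (v : Fin n → ℝ) (hv : ∀ i, 0 ≤ v i) (hvsum : ∑ i, v i = 1)
    (δ : ℝ) (hδ : 0 < δ) :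
    IsEigenprojection
      (L + δ • (1 - Matrix.vecMulVec (fun _ : Fin n => (1 : ℝ)) v))
      (Matrix.vecMulVec (fun _ : Fin n => (1 : ℝ)) (v ᵥ* (1 + δ⁻¹ • L)⁻¹)) ∧
    Tendsto
      (fun ε : ℝ =>
        Matrix.vecMulVec (fun _ : Fin n => (1 : ℝ)) (v ᵥ* (1 + ε⁻¹ • L)⁻¹))
      (𝓝[>] 0)
      (𝓝 (Matrix.vecMulVec (fun _ : Fin n => (1 : ℝ)) (v ᵥ* J))) := by
  have hn : 0 < n := by
    rcases Nat.eq_zero_or_pos n with h | h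
    · subst h
      simp at hvsum
    · exact h
  exact ⟨part1 L hL v hvsum hn δ hδ, part2 L J hL hJ hn v⟩
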